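/- If a positive integer k is primitively represented by 2X² + Y² and has at least two distinct odd prime divisors (say ω'(k) ≥ 2, where ω'(k) counts odd prime divisors), then k admits at least two distinct positive primitive representations (x,y) with x, y > 0 by 2X² + Y². -/

import Mathlib

open Zsqrtd

namespace Zsq2

local notation "R2" => Zsqrtd (-2)

theorem norm_def' (z : R2) : z.norm = z.re * z.re + 2 * (z.im * z.im) := by
  rw [Zsqrtd.norm_def]; ring

theorem norm_nonneg' (z : R2) : 0 ≤ z.norm := Zsqrtd.norm_nonneg (by norm_num) z

theorem norm_eq_zero' {z : R2} : z.norm = 0 ↔ z = 0 :=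
  Zsqrtd.norm_eq_zero_iff (by norm_num) z

instance : Div R2 :=
  ⟨fun x y => ⟨round (((x * star y).re : ℚ) / ((y.norm : ℤ) : ℚ)),
               round (((x * star y).im : ℚ) / ((y.norm : ℤ) : ℚ))⟩⟩

theorem div_def (x y : R2) : x / y = ⟨round (((x * star y).re : ℚ) / ((y.norm : ℤ) : ℚ)),
    round (((x * star y).im : ℚ) / ((y.norm : ℤ) : ℚ))⟩ := rfl

instance : Mod R2 := ⟨fun x y => x - y * (x / y)⟩

theorem mod_def (x y : R2) : x % y = x - y * (x / y) := rfl

theorem norm_mod_lt (x : R2) {y : R2} (hy : y ≠ 0) : (x % y).norm < y.norm := by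
  have hN0 : y.norm ≠ 0 := fun h => hy (norm_eq_zero'.1 h)
  have hNpos : (0:ℤ) < y.norm := lt_of_le_of_ne (norm_nonneg' y) (Ne.symm hN0)
  set N : ℤ := y.norm with hNdef
  set A : ℤ := (x * star y).re with hA
  set B : ℤ := (x * star y).im with hB
  set q : R2 := x / y with hq
  have hqre : q.re = round ((A:ℚ) / (N:ℚ)) := rfl
  have hqim : q.im = round ((B:ℚ) / (N:ℚ)) := rfl
  have e1 : (x % y) * star y = x * star y - (N : R2) * q := by
    have h2 : (N : R2) = y * star y := Zsqrtd.norm_eq_mul_conj y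
    rw [mod_def, h2]; ring
  have e2 : (x % y).norm * N = (A - N * q.re)^2 + 2*(B - N * q.im)^2 := by
    have h3 := congrArg Zsqrtd.norm e1
    rw [Zsqrtd.norm_mul, Zsqrtd.norm_conj, ← hNdef] at h3
    rw [h3, norm_def']
    simp only [Zsqrtd.re_sub, Zsqrtd.im_sub, Zsqrtd.re_mul, Zsqrtd.im_mul,
      Zsqrtd.re_intCast, Zsqrtd.im_intCast, ← hA, ← hB]
    ring
  have hNQ : (0:ℚ) < (N:ℚ) := by exact_mod_cast hNpos
  have h1 : |(A:ℚ) - (N:ℚ)*q.re| ≤ (N:ℚ)/2 := by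
    have heq : (A:ℚ) - (N:ℚ)*q.re = (N:ℚ) * ((A:ℚ)/(N:ℚ) - (q.re:ℚ)) := by
      rw [mul_sub, mul_div_cancel₀ _ hNQ.ne']
    rw [heq, abs_mul, abs_of_pos hNQ, hqre]
    calc (N:ℚ) * |(A:ℚ)/(N:ℚ) - ((round ((A:ℚ)/(N:ℚ)) : ℤ) : ℚ)| ≤ (N:ℚ) * (1/2) :=
          mul_le_mul_of_nonneg_left (abs_sub_round _) hNQ.le
      _ = (N:ℚ)/2 := by ring
  have h2 : |(B:ℚ) - (N:ℚ)*q.im| ≤ (N:ℚ)/2 := by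
    have heq : (B:ℚ) - (N:ℚ)*q.im = (N:ℚ) * ((B:ℚ)/(N:ℚ) - (q.im:ℚ)) := by
      rw [mul_sub, mul_div_cancel₀ _ hNQ.ne']
    rw [heq, abs_mul, abs_of_pos hNQ, hqim]
    calc (N:ℚ) * |(B:ℚ)/(N:ℚ) - ((round ((B:ℚ)/(N:ℚ)) : ℤ) : ℚ)| ≤ (N:ℚ) * (1/2) :=
          mul_le_mul_of_nonneg_left (abs_sub_round _) hNQ.le
      _ = (N:ℚ)/2 := by ring
  have h1' : ((A:ℚ) - (N:ℚ)*q.re)^2 ≤ ((N:ℚ)/2)^2 := by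
    rw [← sq_abs]; exact pow_le_pow_left₀ (abs_nonneg _) h1 2
  have h2' : ((B:ℚ) - (N:ℚ)*q.im)^2 ≤ ((N:ℚ)/2)^2 := by
    rw [← sq_abs]; exact pow_le_pow_left₀ (abs_nonneg _) h2 2
  have e2Q : (((x % y).norm : ℤ) :ℚ) * (N:ℚ)
      = ((A:ℚ) - (N:ℚ) * q.re)^2 + 2*((B:ℚ) - (N:ℚ) * q.im)^2 := by
    exact_mod_cast congrArg (fun t : ℤ => (t:ℚ)) e2
  have hfin : (((x % y).norm : ℤ) :ℚ) < (N:ℚ) := by nlinarith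
  exact_mod_cast hfin

theorem natAbs_norm_mod_lt (x : R2) {y : R2} (hy : y ≠ 0) :
    (x % y).norm.natAbs < y.norm.natAbs :=
  Int.natAbs_lt_natAbs_of_nonneg_of_lt (norm_nonneg' _) (norm_mod_lt x hy)

theorem norm_le_norm_mul_left (x : R2) {y : R2} (hy : y ≠ 0) :
    (norm x).natAbs ≤ (norm (x * y)).natAbs := by
  rw [Zsqrtd.norm_mul, Int.natAbs_mul]
  exact le_mul_of_one_le_right (Nat.zero_le _)
    (Nat.one_le_iff_ne_zero.2 fun h => hy (norm_eq_zero'.1 (Int.natAbs_eq_zero.1 h)))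

instance : Nontrivial (Zsqrtd (-2)) := ⟨⟨0, 1, by decide⟩⟩

instance euclideanDomain : EuclideanDomain (Zsqrtd (-2)) :=
  { Zsqrtd.commRing, (inferInstance : Nontrivial (Zsqrtd (-2))) with
    quotient := (· / ·)
    remainder := (· % ·)
    quotient_zero := fun x => by
      ext <;> simp [div_def]
    quotient_mul_add_remainder_eq := fun _ _ => by simp [mod_def]
    r := _
    r_wellFounded := (measure (Int.natAbs ∘ Zsqrtd.norm)).wf
    remainder_lt := fun x y hy => natAbs_norm_mod_lt x hy
    mul_left_not_lt := fun a _ hb0 => not_lt_of_ge <| norm_le_norm_mul_left a hb0 }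

set_option synthInstance.maxHeartbeats 1000000 in
instance : DecompositionMonoid (Zsqrtd (-2)) := inferInstance

set_option synthInstance.maxHeartbeats 1000000 in
instance : WfDvdMonoid (Zsqrtd (-2)) := inferInstance

theorem unit_eq {u : R2} (h : IsUnit u) : u = 1 ∨ u = -1 := by
  have h1 : u.norm = 1 := (Zsqrtd.norm_eq_one_iff' (by norm_num) u).2 h
  rw [norm_def'] at h1
  have him : u.im = 0 := by nlinarith [sq_nonneg u.re, sq_nonneg u.im, mul_self_nonneg u.im]
  rw [him] at h1
  have hre : u.re = 1 ∨ u.re = -1 := by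
    have : u.re * u.re = 1 := by linarith
    exact mul_self_eq_one_iff.1 this
  rcases hre with h2 | h2
  · left; ext <;> simp [h2, him]
  · right; ext <;> simp [h2, him]

theorem isUnit_int_of_dvd {n : ℤ} {z : R2} (hco : IsCoprime z.re z.im)
    (h : (n : R2) ∣ z) : IsUnit n := by
  obtain ⟨h1, h2⟩ := (Zsqrtd.intCast_dvd n z).1 h
  exact hco.isUnit_of_dvd' h1 h2

theorem star_dvd_of_dvd_star {a z : R2} (h : a ∣ star z) : star a ∣ z := by
  obtain ⟨c, hc⟩ := h
  exact ⟨star c, by rw [← star_star z, hc, star_mul, mul_comm]⟩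

theorem irreducible_star {π : R2} (h : Irreducible π) : Irreducible (star π) := by
  constructor
  · simpa [isUnit_star] using h.not_isUnit
  · intro s t hst
    have h2 : π = star t * star s := by
      have := congrArg star hst; rwa [star_star, star_mul] at this
    rcases h.isUnit_or_isUnit h2 with hs | ht
    · exact Or.inr (isUnit_star.1 hs)
    · exact Or.inl (isUnit_star.1 ht)

theorem irreducible_of_norm_prime {a : R2} (hp : Nat.Prime (norm a).natAbs) :
    Irreducible a := by
  constructor
  · rw [← Zsqrtd.norm_eq_one_iff]; exact fun h => hp.ne_one h
  · intro s t hst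
    have h1 : (norm s).natAbs * (norm t).natAbs = (norm a).natAbs := by
      rw [← Int.natAbs_mul, ← Zsqrtd.norm_mul, ← hst]
    rcases hp.eq_one_or_self_of_dvd (norm s).natAbs ⟨(norm t).natAbs, h1.symm⟩ with h2 | h2
    · exact Or.inl (Zsqrtd.norm_eq_one_iff.1 h2)
    · right
      apply Zsqrtd.norm_eq_one_iff.1
      have h3 : (norm a).natAbs ≠ 0 := hp.pos.ne'
      have h5 : (norm a).natAbs * (norm t).natAbs = (norm a).natAbs * 1 := by
        rw [mul_one]; exact h2 ▸ h1
      exact Nat.eq_of_mul_eq_mul_left (Nat.pos_of_ne_zero h3) h5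

theorem not_assoc_star {π : R2} {p : ℕ} (hp : p.Prime) (hodd : Odd p)
    (hn : π.norm = (p : ℤ)) : ¬Associated π (star π) := by
  rintro ⟨w, hw⟩
  rcases unit_eq w.isUnit with h1 | h1
  · rw [h1, mul_one] at hw
    have him : π.im = 0 := by
      have := congrArg Zsqrtd.im hw
      simp [Zsqrtd.im_star] at this
      omega
    have h2 : π.re * π.re = (p : ℤ) := by rw [← hn, norm_def', him]; ring
    have h3 : π.re.natAbs * π.re.natAbs = p := by
      have := congrArg Int.natAbs h2
      rwa [Int.natAbs_mul, Int.natAbs_natCast] at this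
    rcases hp.eq_one_or_self_of_dvd π.re.natAbs ⟨π.re.natAbs, h3.symm⟩ with h4 | h4
    · rw [h4] at h3; simp at h3; exact hp.ne_one h3.symm
    · rw [h4] at h3
      have := hp.two_le
      nlinarith
  · rw [h1] at hw
    have hre : π.re = 0 := by
      have := congrArg Zsqrtd.re hw
      simp [Zsqrtd.re_star] at this
      omega
    have h2 : 2 * (π.im * π.im) = (p : ℤ) := by rw [← hn, norm_def', hre]; ring
    have h3 : (2 : ℕ) ∣ p := by
      have h4 : (2:ℤ) ∣ (p:ℤ) := ⟨π.im * π.im, h2.symm⟩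
      exact_mod_cast h4
    rcases (Nat.Prime.eq_one_or_self_of_dvd hp 2 h3) with h4 | h4
    · omega
    · rw [← h4] at hodd; simp [Nat.odd_iff] at hodd

theorem exists_pi {p : ℕ} (hp : p.Prime) (hodd : Odd p) {z : R2}
    (hco : IsCoprime z.re z.im) (hdvd : (p : ℤ) ∣ z.norm) :
    ∃ π : R2, Irreducible π ∧ π.norm = (p : ℤ) ∧ π ∣ z ∧ ¬star π ∣ z := by
  have hcastdvd : ((p : ℤ) : R2) ∣ z * star z := by
    rw [← Zsqrtd.norm_eq_mul_conj]
    exact Int.cast_dvd_cast _ _ hdvd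
  have hne1 : ¬IsUnit ((p : ℤ) : R2) := by
    rw [← Zsqrtd.norm_eq_one_iff, Zsqrtd.norm_intCast, Int.natAbs_mul]
    intro h
    have h2 : (p : ℤ).natAbs = 1 := Nat.eq_one_of_mul_eq_one_left h
    simp at h2
    exact hp.ne_one h2
  have hpR : ¬Prime ((p : ℤ) : R2) := by
    intro hP
    have hp1 : ¬IsUnit ((p : ℤ)) := by
      rw [Int.isUnit_iff]
      have := hp.two_le
      rintro (h | h) <;> omega
    rcases hP.2.2 _ _ hcastdvd with h2 | h2
    · exact hp1 (isUnit_int_of_dvd hco h2)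
    · have h3 := star_dvd_of_dvd_star h2
      rw [star_intCast] at h3
      exact hp1 (isUnit_int_of_dvd hco h3)
  have hpnotirr : ¬Irreducible ((p : ℤ) : R2) := fun h =>
    hpR (irreducible_iff_prime.1 h)
  obtain ⟨a, b, hab, hau, hbu⟩ :
      ∃ a b : R2, ((p : ℤ) : R2) = a * b ∧ ¬IsUnit a ∧ ¬IsUnit b := by
    rw [irreducible_iff] at hpnotirr
    push_neg at hpnotirr
    exact hpnotirr hne1
  have hnap : (norm a).natAbs = p := by
    have h1 : (norm a).natAbs * (norm b).natAbs = p ^ 2 := by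
      rw [← Int.natAbs_mul, ← Zsqrtd.norm_mul, ← hab, Zsqrtd.norm_intCast]
      simp [sq, Int.natAbs_mul]
    exact ((hp.mul_eq_prime_sq_iff (mt Zsqrtd.norm_eq_one_iff.1 hau)
      (mt Zsqrtd.norm_eq_one_iff.1 hbu)).1 h1).1
  have hairr : Irreducible a := irreducible_of_norm_prime (hnap ▸ hp)
  have hanorm : a.norm = (p : ℤ) := by
    rw [← Int.natAbs_of_nonneg (norm_nonneg' a), hnap]
  have hmulconj : ∀ w : R2, w.norm = (p : ℤ) → w * star w = ((p : ℤ) : R2) := fun w hw => by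
    rw [← Zsqrtd.norm_eq_mul_conj, hw]
  have hdvdz : a ∣ z ∨ star a ∣ z := by
    have h1 : a ∣ z * star z :=
      dvd_trans ⟨star a, (hmulconj a hanorm).symm⟩ hcastdvd
    rcases (irreducible_iff_prime.1 hairr).2.2 _ _ h1 with h | h
    · exact Or.inl h
    · exact Or.inr (star_dvd_of_dvd_star h)
  have hnotboth : ∀ w : R2, Irreducible w → w.norm = (p : ℤ) → w ∣ z → ¬star w ∣ z := by
    intro w hirr hnorm h1 h2
    obtain ⟨c, rfl⟩ := h1
    have hsw : Irreducible (star w) := irreducible_star hirr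
    have h3 : star w ∣ c := by
      rcases (irreducible_iff_prime.1 hsw).2.2 _ _ h2 with h | h
      · exact absurd ((hsw.associated_of_dvd hirr h).symm)
          (not_assoc_star hp hodd hnorm)
      · exact h
    have h4 : ((p : ℤ) : R2) ∣ w * c := by
      rw [← hmulconj w hnorm]
      exact mul_dvd_mul_left w h3
    have h5 := isUnit_int_of_dvd hco h4
    rw [Int.isUnit_iff] at h5
    have := hp.two_le
    rcases h5 with h | h <;> omega
  rcases hdvdz with h | h
  · exact ⟨a, hairr, hanorm, h, hnotboth a hairr hanorm h⟩
  · refine ⟨star a, irreducible_star hairr, by rw [Zsqrtd.norm_conj, hanorm], h, ?_⟩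
    intro h2
    rw [star_star] at h2
    exact hnotboth (star a) (irreducible_star hairr)
      (by rw [Zsqrtd.norm_conj, hanorm]) h (by rw [star_star]; exact h2)

theorem norm_pow' (a : R2) (n : ℕ) : (a ^ n).norm = a.norm ^ n := by
  induction n with
  | zero => simp
  | succ n ih => rw [pow_succ, Zsqrtd.norm_mul, ih, pow_succ]

theorem abs_isCoprime {a b : ℤ} (h : IsCoprime a b) : IsCoprime |a| |b| := by
  rcases abs_choice a with h1 | h1 <;> rcases abs_choice b with h2 | h2 <;> rw [h1, h2]
  · exact h
  · exact h.neg_right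
  · exact h.neg_left
  · exact h.neg_left.neg_right

theorem coords_ne_zero {p : ℕ} (hp : p.Prime) (hodd : Odd p) {z : R2}
    (hco : IsCoprime z.re z.im) (hdvd : (p : ℤ) ∣ z.norm) : z.re ≠ 0 ∧ z.im ≠ 0 := by
  have h2le := hp.two_le
  constructor
  · intro h
    rw [h] at hco
    have him := isCoprime_zero_left.1 hco
    rw [Int.isUnit_iff] at him
    have hn : z.norm = 2 := by
      rw [norm_def', h]; rcases him with h3 | h3 <;> rw [h3] <;> ring
    rw [hn] at hdvd
    have hd2 : p ∣ 2 := by exact_mod_cast hdvd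
    have hp2 : p = 2 := le_antisymm (Nat.le_of_dvd (by norm_num) hd2) h2le
    rw [hp2] at hodd; simp [Nat.odd_iff] at hodd
  · intro h
    rw [h] at hco
    have hre := isCoprime_zero_right.1 hco
    rw [Int.isUnit_iff] at hre
    have hn : z.norm = 1 := by
      rw [norm_def', h]; rcases hre with h3 | h3 <;> rw [h3] <;> ring
    rw [hn] at hdvd
    have hd1 : p ∣ 1 := by exact_mod_cast hdvd
    simp at hd1; omega

end Zsq2

open Zsq2 Zsqrtd

theorem two_positive_primitive_representations (k : ℕ)
    (hrep : ∃ x y : ℤ, IsCoprime x y ∧ (k : ℤ) = 2 * x ^ 2 + y ^ 2)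
    (homega : ∃ p q : ℕ, p.Prime ∧ q.Prime ∧ Odd p ∧ Odd q ∧ p ≠ q ∧ p ∣ k ∧ q ∣ k) :
    ∃ x y x' y' : ℤ, 0 < x ∧ 0 < y ∧ 0 < x' ∧ 0 < y' ∧
      IsCoprime x y ∧ IsCoprime x' y' ∧
      (k : ℤ) = 2 * x ^ 2 + y ^ 2 ∧ (k : ℤ) = 2 * x' ^ 2 + y' ^ 2 ∧
      (x, y) ≠ (x', y') := by
  obtain ⟨x, y, hco, hk⟩ := hrep
  obtain ⟨p, q, hp, hq, hpodd, hqodd, hpq, hpk, hqk⟩ := homega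
  set z : Zsqrtd (-2) := ⟨y, x⟩ with hzdef
  have hznorm : z.norm = (k : ℤ) := by
    rw [norm_def']
    show y * y + 2 * (x * x) = (k : ℤ)
    rw [hk]; ring
  have hcoz : IsCoprime z.re z.im := hco.symm
  have hz0 : z ≠ 0 := by
    intro h
    have h1 := hcoz
    rw [h] at h1
    simp only [Zsqrtd.re_zero, Zsqrtd.im_zero] at h1
    exact not_isCoprime_zero_zero h1
  have hpk' : (p : ℤ) ∣ (k : ℤ) := by exact_mod_cast hpk
  have hqk' : (q : ℤ) ∣ (k : ℤ) := by exact_mod_cast hqk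
  have hpzk : (p : ℤ) ∣ z.norm := by rw [hznorm]; exact hpk'
  obtain ⟨π, hπirr, hπnorm, hπz, hπsz⟩ := exists_pi hp hpodd hcoz hpzk
  have hπprime : Prime π := irreducible_iff_prime.1 hπirr
  have hsπirr : Irreducible (star π) := irreducible_star hπirr
  have hnassoc := not_assoc_star hp hpodd hπnorm
  obtain ⟨e, u, hu, hzu⟩ := WfDvdMonoid.max_power_factor hz0 hπirr
  have hu0 : u ≠ 0 := by
    rintro rfl
    rw [mul_zero] at hzu
    exact hz0 hzu
  have he : e ≠ 0 := by
    rintro rfl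
    rw [pow_zero, one_mul] at hzu
    exact hu (hzu ▸ hπz)
  have hπe : π ∣ π ^ e := dvd_pow_self π he
  have hsπ0 : star π ≠ 0 := by
    intro h0
    have : (star π).norm = (p : ℤ) := by rw [Zsqrtd.norm_conj, hπnorm]
    rw [h0] at this
    simp at this
    exact hp.ne_zero (by exact_mod_cast this.symm)
  have hπnsπ : ¬π ∣ star π ^ e := fun hd =>
    hnassoc (hπirr.associated_of_dvd hsπirr (hπprime.dvd_of_dvd_pow hd))
  set z' : Zsqrtd (-2) := star π ^ e * u with hz'def
  have hz'norm : z'.norm = (k : ℤ) := by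
    rw [hz'def, Zsqrtd.norm_mul, norm_pow', Zsqrtd.norm_conj, ← norm_pow',
      ← Zsqrtd.norm_mul, ← hzu, hznorm]
  have hudvdz : u ∣ z := ⟨π ^ e, by rw [hzu]; ring⟩
  have hπp : ((p : ℤ) : Zsqrtd (-2)) = π * star π := by
    rw [← Zsqrtd.norm_eq_mul_conj, hπnorm]
  -- primitivity of z'
  have hcoz' : IsCoprime z'.re z'.im := by
    rw [Int.isCoprime_iff_gcd_eq_one]
    by_contra hg
    obtain ⟨ℓ, hℓ, hℓdvd⟩ := Nat.exists_prime_and_dvd hg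
    have hℓre : (ℓ : ℤ) ∣ z'.re := (Int.natCast_dvd_natCast.2 hℓdvd).trans (Int.gcd_dvd_left _ _)
    have hℓim : (ℓ : ℤ) ∣ z'.im := (Int.natCast_dvd_natCast.2 hℓdvd).trans (Int.gcd_dvd_right _ _)
    have hℓR : ((ℓ : ℤ) : Zsqrtd (-2)) ∣ z' := (Zsqrtd.intCast_dvd _ _).2 ⟨hℓre, hℓim⟩
    by_cases hsd : star π ∣ ((ℓ : ℤ) : Zsqrtd (-2))
    · -- then p = ℓ
      obtain ⟨c, hc⟩ := hsd
      have hnd : (p : ℤ) ∣ (ℓ : ℤ) * (ℓ : ℤ) := by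
        refine ⟨c.norm, ?_⟩
        have := congrArg Zsqrtd.norm hc
        rwa [Zsqrtd.norm_mul, Zsqrtd.norm_conj, hπnorm, Zsqrtd.norm_intCast] at this
      have hpl : p ∣ ℓ * ℓ := by exact_mod_cast hnd
      have hpℓ : p = ℓ :=
        (Nat.prime_dvd_prime_iff_eq hp hℓ).1 (((Nat.Prime.dvd_mul hp).1 hpl).elim id id)
      have hπz' : π ∣ z' := by
        refine dvd_trans ⟨star π, ?_⟩ (hpℓ ▸ hℓR)
        rw [← hπp]
      rcases hπprime.2.2 _ _ (hz'def ▸ hπz') with h | h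
      · exact hπnsπ h
      · exact hu h
    · have hcop : IsCoprime ((ℓ : ℤ) : Zsqrtd (-2)) (star π ^ e) :=
        ((hsπirr.coprime_iff_not_dvd.2 hsd).symm).pow_right
      have hlu : ((ℓ : ℤ) : Zsqrtd (-2)) ∣ u := hcop.dvd_of_dvd_mul_left (hz'def ▸ hℓR)
      have hun : IsUnit ((ℓ : ℤ)) := isUnit_int_of_dvd hcoz (hlu.trans hudvdz)
      rw [Int.isUnit_iff] at hun
      have := hℓ.two_le
      rcases hun with h | h <;> omega
  obtain ⟨hyne, hxne⟩ := coords_ne_zero hp hpodd hcoz hpzk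
  obtain ⟨hy'ne, hx'ne⟩ := coords_ne_zero hp hpodd hcoz' (by rw [hz'norm]; exact hpk')
  refine ⟨|z.im|, |z.re|, |z'.im|, |z'.re|, abs_pos.2 hxne, abs_pos.2 hyne,
    abs_pos.2 hx'ne, abs_pos.2 hy'ne, abs_isCoprime hcoz.symm, abs_isCoprime hcoz'.symm,
    ?_, ?_, ?_⟩
  · rw [sq_abs, sq_abs, ← hznorm, norm_def']; ring
  · rw [sq_abs, sq_abs, ← hz'norm, norm_def']; ring
  · -- distinctness
    intro hEq
    rw [Prod.mk.injEq] at hEq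
    obtain ⟨h1, h2⟩ := hEq
    rw [abs_eq_abs] at h1 h2
    have hA : ∀ w : Zsqrtd (-2), z' = w → (star π ^ e * u = w) := fun w hw => by
      rw [← hz'def]; exact hw
    have hcase_z : z' ≠ z ∧ z' ≠ -z := by
      constructor
      · intro h
        have h3 : star π ^ e * u = π ^ e * u := by rw [← hz'def, h, hzu]
        have h4 : star π ^ e = π ^ e := mul_right_cancel₀ hu0 h3
        exact hπnsπ (by rw [h4]; exact hπe)
      · intro h
        have h3 : star π ^ e * u = -(π ^ e) * u := by rw [← hz'def, h, hzu]; ring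
        have h4 : star π ^ e = -(π ^ e) := mul_right_cancel₀ hu0 h3
        exact hπnsπ (by rw [h4]; exact dvd_neg.2 hπe)
    have hsz : star z = star π ^ e * star u := by
      rw [hzu, star_mul, star_pow, mul_comm]
    have hcase_sz : z' ≠ star z ∧ z' ≠ -star z := by
      constructor
      · intro h
        have h3 : star π ^ e * u = star π ^ e * star u := by rw [← hz'def, h, hsz]
        have h4 : u = star u := mul_left_cancel₀ (pow_ne_zero _ hsπ0) h3
        have him : u.im = 0 := by
          have h5 := congrArg Zsqrtd.im h4
          simp only [Zsqrtd.im_star] at h5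
          omega
        have hu' : (u.re : Zsqrtd (-2)) = u := by
          ext <;> simp [him]
        have hunit : IsUnit u.re := isUnit_int_of_dvd hcoz (by rw [hu']; exact hudvdz)
        have hnormu : u.norm = 1 := by
          rw [norm_def', him]
          rcases Int.isUnit_iff.1 hunit with h6 | h6 <;> rw [h6] <;> ring
        have hkpe : (k : ℤ) = (p : ℤ) ^ e := by
          rw [← hznorm, hzu, Zsqrtd.norm_mul, norm_pow', hπnorm, hnormu, mul_one]
        have hq2 : q ∣ p ^ e := by
          have : (q : ℤ) ∣ (p : ℤ) ^ e := hkpe ▸ hqk'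
          exact_mod_cast this
        exact hpq ((Nat.prime_dvd_prime_iff_eq hq hp).1 (hq.dvd_of_dvd_pow hq2)).symm
      · intro h
        have h3 : star π ^ e * u = star π ^ e * (-star u) := by
          rw [← hz'def, h, hsz]; ring
        have h4 : u = -star u := mul_left_cancel₀ (pow_ne_zero _ hsπ0) h3
        have hre : u.re = 0 := by
          have h5 := congrArg Zsqrtd.re h4
          simp only [Zsqrtd.re_neg, Zsqrtd.re_star] at h5
          omega
        have hdvd2 : ((u.im : ℤ) : Zsqrtd (-2)) ∣ u :=
          ⟨⟨0, 1⟩, by ext <;> simp [hre, Zsqrtd.re_mul, Zsqrtd.im_mul]⟩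
        have hunit : IsUnit u.im := isUnit_int_of_dvd hcoz (hdvd2.trans hudvdz)
        have hnormu : u.norm = 2 := by
          rw [norm_def', hre]
          rcases Int.isUnit_iff.1 hunit with h6 | h6 <;> rw [h6] <;> ring
        have hkpe : (k : ℤ) = (p : ℤ) ^ e * 2 := by
          rw [← hznorm, hzu, Zsqrtd.norm_mul, norm_pow', hπnorm, hnormu]
        have hq2 : q ∣ p ^ e * 2 := by
          have : (q : ℤ) ∣ (p : ℤ) ^ e * 2 := hkpe ▸ hqk'
          exact_mod_cast this
        rcases (Nat.Prime.dvd_mul hq).1 hq2 with h5 | h5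
        · exact hpq ((Nat.prime_dvd_prime_iff_eq hq hp).1 (hq.dvd_of_dvd_pow h5)).symm
        · have hq2' : q = 2 := le_antisymm (Nat.le_of_dvd (by norm_num) h5) hq.two_le
          rw [hq2'] at hqodd; simp [Nat.odd_iff] at hqodd
    rcases h1 with h1 | h1 <;> rcases h2 with h2 | h2
    · refine hcase_z.1 (Zsqrtd.ext ?_ ?_)
      · exact h2.symm
      · exact h1.symm
    · refine hcase_sz.2 (Zsqrtd.ext ?_ ?_)
      · show z'.re = (-star z).re
        rw [Zsqrtd.re_neg, Zsqrtd.re_star]; omega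
      · show z'.im = (-star z).im
        rw [Zsqrtd.im_neg, Zsqrtd.im_star]; omega
    · refine hcase_sz.1 (Zsqrtd.ext ?_ ?_)
      · show z'.re = (star z).re
        rw [Zsqrtd.re_star]; omega
      · show z'.im = (star z).im
        rw [Zsqrtd.im_star]; omega
    · refine hcase_z.2 (Zsqrtd.ext ?_ ?_)
      · show z'.re = (-z).re
        rw [Zsqrtd.re_neg]; omega
      · show z'.im = (-z).im
        rw [Zsqrtd.im_neg]; omega
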